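/- For every prime p, the cyclic group Z_p (the integers modulo p, written additively) has exactly p − 1 skew-morphisms; that is, the number of permutations σ of Z_p with σ(0) = 0 for which there exists a function π : Z_p → ℤ satisfying σ(x + y) = σ(x) + σ^{π(x)}(y) for all x, y in Z_p is exactly p − 1. -/

import Mathlib

open Equiv
open scoped commutatorElement

namespace SkewAux

variable {p : ℕ}

/-- translation permutation -/
abbrev T (b : ZMod p) : Equiv.Perm (ZMod p) := Equiv.addLeft b

lemma T_apply (b x : ZMod p) : T b x = b + x := rfl

lemma T_mul (a b : ZMod p) : (T a : Perm (ZMod p)) * T b = T (a + b) := by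
  ext x; simp [Equiv.Perm.mul_apply, T_apply, add_assoc]

lemma T_zero : (T (0 : ZMod p)) = 1 := by ext x; simp [T_apply]

lemma T_inv (a : ZMod p) : (T a)⁻¹ = T (-a) := by
  refine inv_eq_of_mul_eq_one_right ?_
  rw [T_mul, add_neg_cancel, T_zero]

lemma T_comm (a b : ZMod p) : Commute (T a) (T b) := by
  unfold Commute SemiconjBy
  rw [T_mul, T_mul, add_comm]

lemma T_pow (a : ZMod p) (n : ℕ) : (T a) ^ n = T (n • a) := by
  induction n with
  | zero => simp [T_zero]
  | succ n ih => rw [pow_succ, ih, T_mul, succ_nsmul]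

lemma T_zpow (a : ZMod p) (m : ℤ) : (T a) ^ m = T (m • a) := by
  cases m with
  | ofNat n => simp only [Int.ofNat_eq_coe, zpow_natCast, natCast_zsmul]; exact T_pow a n
  | negSucc n =>
      rw [zpow_negSucc, T_pow, T_inv]
      congr 1
      rw [Int.negSucc_eq, zsmul_eq_mul, nsmul_eq_mul]
      push_cast
      ring


section Skew

variable (σ : Equiv.Perm (ZMod p)) (π : ZMod p → ℤ)
variable (hR : ∀ b : ZMod p, σ * T b = T (σ b) * σ ^ (π b))

include hR

lemma hRinv (c : ZMod p) : σ⁻¹ * T c = T (σ⁻¹ c) * σ ^ (-(π (σ⁻¹ c))) := by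
  have h1 : σ * T (σ⁻¹ c) = T c * σ ^ (π (σ⁻¹ c)) := by
    rw [hR (σ⁻¹ c), Perm.coe_inv, Equiv.apply_symm_apply]
  have h2 : T (σ⁻¹ c) = σ⁻¹ * (T c * σ ^ (π (σ⁻¹ c))) := by
    rw [← h1]; group
  rw [h2]; group

lemma L1 : ∀ (j : ℤ) (b : ZMod p), ∃ (c : ZMod p) (m : ℤ), σ ^ j * T b = T c * σ ^ m := by
  intro j
  induction j using Int.induction_on with
  | zero => exact fun b => ⟨b, 0, by simp⟩
  | succ j ih =>
      intro b
      obtain ⟨c, m, hcm⟩ := ih b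
      refine ⟨σ c, π c + m, ?_⟩
      have h1 : σ ^ (j + 1 : ℤ) = σ * σ ^ (j : ℤ) := by group
      calc σ ^ (j+1:ℤ) * T b = σ * (σ ^ (j:ℤ) * T b) := by rw [h1, mul_assoc]
        _ = σ * (T c * σ ^ m) := by rw [hcm]
        _ = (σ * T c) * σ ^ m := by rw [mul_assoc]
        _ = T (σ c) * σ ^ (π c) * σ ^ m := by rw [hR c]
        _ = T (σ c) * σ ^ (π c + m) := by rw [mul_assoc, ← zpow_add]
  | pred j ih =>
      intro b
      obtain ⟨c, m, hcm⟩ := ih b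
      refine ⟨σ⁻¹ c, -(π (σ⁻¹ c)) + m, ?_⟩
      have h1 : σ ^ (-j - 1 : ℤ) = σ⁻¹ * σ ^ (-j : ℤ) := by group
      calc σ ^ (-j-1:ℤ) * T b = σ⁻¹ * (σ ^ (-j:ℤ) * T b) := by rw [h1, mul_assoc]
        _ = σ⁻¹ * (T c * σ ^ m) := by rw [hcm]
        _ = (σ⁻¹ * T c) * σ ^ m := by rw [mul_assoc]
        _ = T (σ⁻¹ c) * σ ^ (-(π (σ⁻¹ c))) * σ ^ m := by rw [hRinv σ π hR c]
        _ = T (σ⁻¹ c) * σ ^ (-(π (σ⁻¹ c)) + m) := by rw [mul_assoc, ← zpow_add]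

lemma BA : ∀ (i : ℤ) (w : ZMod p), ∃ (m : ℤ) (c : ZMod p), T w * σ ^ i = σ ^ m * T c := by
  intro i w
  obtain ⟨c', m', h⟩ := L1 σ π hR (-i) (-w)
  refine ⟨-m', -c', ?_⟩
  have h2 : (σ ^ (-i:ℤ) * T (-w))⁻¹ = (T c' * σ ^ m')⁻¹ := by rw [h]
  rw [mul_inv_rev, mul_inv_rev, T_inv, T_inv, ← zpow_neg, ← zpow_neg] at h2
  simp only [neg_neg] at h2
  exact h2

end Skew

/-- commutator unchanged when multiplying right entry by something commuting with the left -/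
lemma comm_mul_right {G : Type*} [Group G] (a b c : G) (h : Commute a c) :
    ⁅a, b * c⁆ = ⁅a, b⁆ := by
  have hc : c * a⁻¹ = a⁻¹ * c := h.inv_left.symm.eq
  simp only [commutatorElement_def, mul_inv_rev]
  calc a * (b * c) * a⁻¹ * (c⁻¹ * b⁻¹) = a * b * (c * a⁻¹ * c⁻¹) * b⁻¹ := by group
    _ = a * b * (a⁻¹ * c * c⁻¹) * b⁻¹ := by rw [hc]
    _ = a * b * a⁻¹ * b⁻¹ := by group

lemma comm_mul_left {G : Type*} [Group G] (a b c : G) (h : Commute c b) :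
    ⁅a * c, b⁆ = ⁅a, b⁆ := by
  have hc : c * b = b * c := h.eq
  simp only [commutatorElement_def, mul_inv_rev]
  calc a * c * b * (c⁻¹ * a⁻¹) * b⁻¹ = a * (c * b * c⁻¹) * a⁻¹ * b⁻¹ := by group
    _ = a * (b * c * c⁻¹) * a⁻¹ * b⁻¹ := by rw [hc]
    _ = a * b * a⁻¹ * b⁻¹ := by group

section Skew2

variable (σ : Equiv.Perm (ZMod p))

lemma ruleB (u c : ZMod p) (i k m : ℤ) (h : σ ^ k * T u = T c * σ ^ m) :
    σ ^ k * ⁅(T u : Perm (ZMod p)), σ ^ i⁆ * (σ ^ k)⁻¹ = ⁅(T c : Perm (ZMod p)), σ ^ i⁆ := by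
  have e1 : σ ^ k * ⁅(T u : Perm (ZMod p)), σ ^ i⁆ * (σ ^ k)⁻¹
      = ⁅σ ^ k * T u * (σ ^ k)⁻¹, σ ^ k * σ ^ i * (σ ^ k)⁻¹⁆ := by
    rw [← MulAut.conj_apply (σ ^ k) (T u), ← MulAut.conj_apply (σ ^ k) (σ ^ i),
      ← map_commutatorElement]
    rfl
  rw [e1]
  have e2 : σ ^ k * σ ^ i * (σ ^ k)⁻¹ = σ ^ i := by group
  have e3 : σ ^ k * T u * (σ ^ k)⁻¹ = T c * σ ^ (m - k) := by
    rw [h]; group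
  rw [e2, e3, comm_mul_left]
  exact (Commute.refl σ).zpow_zpow (m - k) i

lemma ruleA (u w c : ZMod p) (i m : ℤ) (h : T w * σ ^ i = σ ^ m * T c) :
    T w * ⁅(T u : Perm (ZMod p)), σ ^ i⁆ * (T w)⁻¹ = ⁅(T u : Perm (ZMod p)), σ ^ m⁆ := by
  have e1 : T w * ⁅(T u : Perm (ZMod p)), σ ^ i⁆ * (T w)⁻¹
      = ⁅T w * T u * (T w)⁻¹, T w * σ ^ i * (T w)⁻¹⁆ := by
    rw [← MulAut.conj_apply (T w : Perm (ZMod p)) (T u), ← MulAut.conj_apply (T w : Perm (ZMod p)) (σ ^ i),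
      ← map_commutatorElement]
    rfl
  rw [e1]
  have e2 : T w * T u * (T w)⁻¹ = (T u : Perm (ZMod p)) := by
    rw [(T_comm w u).eq]; group
  have e3 : T w * σ ^ i * (T w)⁻¹ = σ ^ m * (T c * (T w)⁻¹) := by
    rw [h]; group
  rw [e2, e3, T_inv, T_mul, comm_mul_right]
  exact T_comm u (c + -w)

end Skew2

section Skew3

variable (σ : Equiv.Perm (ZMod p)) (π : ZMod p → ℤ)
variable (hR : ∀ b : ZMod p, σ * T b = T (σ b) * σ ^ (π b))

include hR

lemma gen_commute (u w : ZMod p) (i j : ℤ) :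
    Commute ⁅(T w : Perm (ZMod p)), σ ^ j⁆ ⁅(T u : Perm (ZMod p)), σ ^ i⁆ := by
  obtain ⟨u', k, d1⟩ := L1 σ π hR (-j) u
  obtain ⟨i', c, d2⟩ := BA σ π hR i (-w)
  have d3 : σ ^ (j:ℤ) * T u' = T u * σ ^ (-k) := by
    have h' : T u' = σ ^ (-j:ℤ) * T u * (σ ^ k)⁻¹ := by rw [d1]; group
    rw [h']; group
  have d4 : T w * σ ^ i' = σ ^ i * T (-c) := by
    have h'' : σ ^ (i':ℤ) = T (-w) * σ ^ i * (T c)⁻¹ := by rw [d2]; group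
    rw [h'', T_inv]
    calc T w * (T (-w) * σ ^ i * T (-c)) = (T w * T (-w)) * (σ ^ i * T (-c)) := by group
      _ = σ ^ i * T (-c) := by rw [T_mul, add_neg_cancel, T_zero, one_mul]
  set x := ⁅(T u : Perm (ZMod p)), σ ^ i⁆ with hx
  have step1 : σ ^ (-j:ℤ) * x * (σ ^ (-j:ℤ))⁻¹ = ⁅(T u' : Perm (ZMod p)), σ ^ i⁆ :=
    ruleB σ u u' i (-j) k d1
  have step2 : (T (-w) : Perm (ZMod p)) * ⁅(T u' : Perm (ZMod p)), σ ^ i⁆ * (T (-w))⁻¹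
      = ⁅(T u' : Perm (ZMod p)), σ ^ i'⁆ := ruleA σ u' (-w) c i i' d2
  rw [← T_inv, inv_inv] at step2
  have step3 : σ ^ (j:ℤ) * ⁅(T u' : Perm (ZMod p)), σ ^ i'⁆ * (σ ^ (j:ℤ))⁻¹
      = ⁅(T u : Perm (ZMod p)), σ ^ i'⁆ := ruleB σ u' u i' j (-k) d3
  have step4 : (T w : Perm (ZMod p)) * ⁅(T u : Perm (ZMod p)), σ ^ i'⁆ * (T w)⁻¹
      = ⁅(T u : Perm (ZMod p)), σ ^ i⁆ := ruleA σ u w (-c) i' i d4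
  have key : ⁅(T w : Perm (ZMod p)), σ ^ j⁆ * x * ⁅(T w : Perm (ZMod p)), σ ^ j⁆⁻¹ = x := by
    have expand : ⁅(T w : Perm (ZMod p)), σ ^ j⁆ * x * ⁅(T w : Perm (ZMod p)), σ ^ j⁆⁻¹
        = T w * (σ ^ (j:ℤ) * ((T w)⁻¹ * ((σ ^ (-j:ℤ)) * x * (σ ^ (-j:ℤ))⁻¹) * T w) * (σ ^ (j:ℤ))⁻¹) * (T w)⁻¹ := by
      rw [commutatorElement_def]
      group
    rw [expand, step1, step2, step3, step4]
  have : ⁅(T w : Perm (ZMod p)), σ ^ j⁆ * x = x * ⁅(T w : Perm (ZMod p)), σ ^ j⁆ := by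
    have := mul_inv_eq_iff_eq_mul.mp key
    exact this
  exact this

/-- the set of mixed commutators -/
def S : Set (Perm (ZMod p)) := {x | ∃ (u : ZMod p) (i : ℤ), x = ⁅(T u : Perm (ZMod p)), σ ^ i⁆}

/-- Itô subgroup -/
def M : Subgroup (Perm (ZMod p)) := Subgroup.closure (S σ)

omit hR in
lemma conj_mem_M (h : Perm (ZMod p)) (hh : ∀ s ∈ S σ, h * s * h⁻¹ ∈ S σ) :
    ∀ g ∈ M σ, h * g * h⁻¹ ∈ M σ := by
  intro g hg
  have : (MulAut.conj h).toMonoidHom '' (S σ) ⊆ S σ := by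
    rintro _ ⟨s, hs, rfl⟩
    exact hh s hs
  have hmap : (M σ).map (MulAut.conj h).toMonoidHom ≤ M σ := by
    rw [M, MonoidHom.map_closure]
    exact Subgroup.closure_mono this |>.trans (le_of_eq rfl)
  have : (MulAut.conj h).toMonoidHom g ∈ (M σ).map (MulAut.conj h).toMonoidHom :=
    Subgroup.mem_map_of_mem _ hg
  exact hmap this

lemma T_conj_mem_M (a : ZMod p) : ∀ g ∈ M σ, T a * g * (T a)⁻¹ ∈ M σ := by
  apply conj_mem_M σ
  rintro _ ⟨u, i, rfl⟩
  obtain ⟨m, c, hba⟩ := BA σ π hR i a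
  exact ⟨u, m, ruleA σ u a c i m hba⟩

lemma σ_conj_mem_M : ∀ g ∈ M σ, σ * g * σ⁻¹ ∈ M σ := by
  apply conj_mem_M σ
  rintro _ ⟨u, i, rfl⟩
  have h1 : σ ^ (1:ℤ) * T u = T (σ u) * σ ^ (π u) := by rw [zpow_one]; exact hR u
  refine ⟨σ u, i, ?_⟩
  have := ruleB σ u (σ u) i 1 (π u) h1
  rw [zpow_one] at this
  exact this

lemma M_comm : ∀ x ∈ M σ, ∀ y ∈ M σ, Commute x y := by
  have step1 : ∀ s ∈ S σ, ∀ y ∈ M σ, y * s = s * y := by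
    intro s hs
    have : M σ ≤ Subgroup.centralizer {s} := by
      apply Subgroup.closure_le _ |>.mpr
      intro z hz
      rw [SetLike.mem_coe, Subgroup.mem_centralizer_iff]
      rintro _ rfl
      obtain ⟨u, i, rfl⟩ := hs
      obtain ⟨u', i', rfl⟩ := hz
      exact (gen_commute σ π hR u' u i' i).eq
    intro y hy
    have := this hy
    rw [Subgroup.mem_centralizer_iff] at this
    exact (this s (Set.mem_singleton s)).symm
  intro x hx y hy
  have : M σ ≤ Subgroup.centralizer (M σ) := by
    apply Subgroup.closure_le _ |>.mpr
    intro z hz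
    rw [SetLike.mem_coe, Subgroup.mem_centralizer_iff]
    intro h hh
    exact step1 z hz h hh
  have := this hx
  rw [Subgroup.mem_centralizer_iff] at this
  exact (this y hy).symm

end Skew3

section Main

variable {p : ℕ} [hp : Fact p.Prime]

/-- a permutation commuting with the translation by one is a translation -/
lemma eq_T_of_commute_T_one (g : Perm (ZMod p)) (h : (T 1 : Perm (ZMod p)) * g = g * T 1) :
    g = T (g 0) := by
  haveI : NeZero p := ⟨hp.out.ne_zero⟩
  have key : ∀ n : ℕ, g (n : ZMod p) = g 0 + (n : ZMod p) := by
    intro n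
    induction n with
    | zero => simp
    | succ n ih =>
        have h1 : ((T 1 : Perm (ZMod p)) * g) ((n : ZMod p)) = (g * (T 1 : Perm (ZMod p))) ((n : ZMod p)) := by rw [h]
        rw [Equiv.Perm.mul_apply, Equiv.Perm.mul_apply, T_apply, T_apply] at h1
        push_cast
        rw [add_comm (n:ZMod p) 1, ← h1, ih]
        ring
  ext x
  have hx : ((x.val : ℕ) : ZMod p) = x := ZMod.natCast_rightInverse x
  rw [T_apply, ← hx, key]

/-- from a conjugation relation on a translation, σ is multiplication -/
lemma affine (σ : Perm (ZMod p)) (h0 : σ 0 = 0) (c : ZMod p) (hc : c ≠ 0) (d : ZMod p)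
    (h : σ * T c * σ⁻¹ = T d) :
    ∃ a : ZMod p, a ≠ 0 ∧ ∀ x, σ x = a * x := by
  haveI : NeZero p := ⟨hp.out.ne_zero⟩
  have hrel : ∀ y, σ (c + y) = d + σ y := by
    intro y
    have h1 : (σ * T c * σ⁻¹) (σ y) = T d (σ y) := by rw [h]
    simpa [Equiv.Perm.mul_apply, T_apply] using h1
  have hd : d = σ c := by
    have := hrel 0
    rw [add_zero, h0, add_zero] at this
    exact this.symm
  have hmul : ∀ n : ℕ, σ (n • c) = n • d := by
    intro n
    induction n with
    | zero => simpa using h0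
    | succ n ih =>
        rw [succ_nsmul, succ_nsmul, add_comm (n • c) c, hrel, ih, add_comm]
  refine ⟨d * c⁻¹, mul_ne_zero ?_ (inv_ne_zero hc), ?_⟩
  · rw [hd]
    intro hzero
    exact hc (σ.injective (by rw [hzero, h0]))
  · intro x
    have hx : (((x * c⁻¹).val : ℕ) : ZMod p) = x * c⁻¹ := ZMod.natCast_rightInverse _
    have h1 : ((x * c⁻¹).val) • c = x := by
      rw [nsmul_eq_mul, hx, mul_assoc, inv_mul_cancel₀ hc, mul_one]
    calc σ x = σ (((x * c⁻¹).val) • c) := by rw [h1]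
      _ = ((x * c⁻¹).val) • d := hmul _
      _ = (x * c⁻¹) * d := by rw [nsmul_eq_mul, hx]
      _ = d * c⁻¹ * x := by ring

/-- main structure lemma: a skew morphism of Z_p is multiplication by a unit -/
theorem skew_is_mul (σ : Equiv.Perm (ZMod p)) (h0 : σ 0 = 0) (π : ZMod p → ℤ)
    (hs : ∀ x y : ZMod p, σ (x + y) = σ x + (σ ^ π x) y) :
    ∃ a : ZMod p, a ≠ 0 ∧ ∀ x, σ x = a * x := by
  haveI : NeZero p := ⟨hp.out.ne_zero⟩
  have hR : ∀ b : ZMod p, σ * T b = T (σ b) * σ ^ (π b) := by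
    intro b
    ext y
    rw [Equiv.Perm.mul_apply, Equiv.Perm.mul_apply, T_apply, T_apply]
    exact hs b y
  by_cases htriv : (T 1 : Perm (ZMod p)) * σ = σ * T 1
  · -- commuting case : σ is the identity
    have h := htriv
    have hcon : σ * T 1 * σ⁻¹ = T 1 := by rw [← h]; group
    exact affine σ h0 1 one_ne_zero 1 hcon
  · -- non-trivial case
    -- the subgroup M is nontrivial
    have hMne : ⁅(T 1 : Perm (ZMod p)), σ ^ (1:ℤ)⁆ ≠ 1 := by
      rw [zpow_one]
      intro hcomm
      apply htriv
      have := commutatorElement_eq_one_iff_commute.mp hcomm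
      exact this.eq
    have hmem1 : ⁅(T 1 : Perm (ZMod p)), σ ^ (1:ℤ)⁆ ∈ M σ :=
      Subgroup.subset_closure ⟨1, 1, rfl⟩
    -- the orbit of 0 under M
    set Ω : Set (ZMod p) := {x | ∃ g ∈ M σ, g 0 = x} with hΩ
    have hΩ0 : (0 : ZMod p) ∈ Ω := ⟨1, (M σ).one_mem, rfl⟩
    -- conjugation formula
    have horb : ∀ g ∈ M σ, ∀ a : ZMod p, g a = a + (T (-a) * g * (T (-a))⁻¹) 0 := by
      intro g hg a
      rw [T_inv, neg_neg]
      simp only [Equiv.Perm.mul_apply, T_apply, add_zero]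
      ring
    -- Ω is closed under addition
    have hΩadd : ∀ x ∈ Ω, ∀ y ∈ Ω, x + y ∈ Ω := by
      rintro x ⟨g, hg, rfl⟩ y ⟨h, hh, rfl⟩
      refine ⟨(T (h 0) * g * (T (h 0))⁻¹) * h, (M σ).mul_mem (T_conj_mem_M σ π hR (h 0) g hg) hh, ?_⟩
      rw [T_inv]
      simp only [Equiv.Perm.mul_apply, T_apply, neg_add_cancel]
      ring
    -- Ω contains a nonzero element
    have hΩne : ∃ x ∈ Ω, x ≠ 0 := by
      by_contra hcon
      push_neg at hcon
      apply hMne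
      have hall : ∀ g ∈ M σ, g = 1 := by
        intro g hg
        ext a
        have h1 := horb g hg a
        have h2 : (T (-a) * g * (T (-a))⁻¹) 0 = 0 :=
          hcon _ ⟨_, T_conj_mem_M σ π hR (-a) g hg, rfl⟩
        rw [h2, add_zero] at h1
        simpa using h1
      exact hall _ hmem1
    -- Ω is everything
    have hΩuniv : ∀ y : ZMod p, y ∈ Ω := by
      obtain ⟨x, hxΩ, hx0⟩ := hΩne
      have hns : ∀ n : ℕ, n • x ∈ Ω := by
        intro n
        induction n with
        | zero => simpa using hΩ0
        | succ n ih => rw [succ_nsmul]; exact hΩadd _ ih _ hxΩ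
      intro y
      have hx : (((y * x⁻¹).val : ℕ) : ZMod p) = y * x⁻¹ := ZMod.natCast_rightInverse _
      have : ((y * x⁻¹).val) • x = y := by
        rw [nsmul_eq_mul, hx, mul_assoc, inv_mul_cancel₀ hx0, mul_one]
      rw [← this]
      exact hns _
    -- the stabilizer of 0 in M is trivial
    have hstab : ∀ g ∈ M σ, g 0 = 0 → g = 1 := by
      intro g hg hg0
      ext a
      obtain ⟨h, hh, hha⟩ := hΩuniv a
      have hcomm := M_comm σ π hR g hg h hh
      calc g a = g (h 0) := by rw [hha]
        _ = (g * h) 0 := rfl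
        _ = (h * g) 0 := by rw [hcomm.eq]
        _ = h (g 0) := rfl
        _ = a := by rw [hg0, hha]
    -- M has cardinality p
    have hcard : Nat.card ↥(M σ) = p := by
      have hbij : Function.Bijective (fun g : ↥(M σ) => (g : Perm (ZMod p)) 0) := by
        constructor
        · rintro ⟨g, hg⟩ ⟨h, hh⟩ hgh
          simp only at hgh
          have : (h⁻¹ * g) 0 = 0 := by
            rw [Equiv.Perm.mul_apply, hgh, Perm.coe_inv, Equiv.symm_apply_apply]
          have h1 : h⁻¹ * g = 1 := hstab _ ((M σ).mul_mem ((M σ).inv_mem hh) hg) this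
          have h2 : g = h := by
            have := congrArg (fun z => h * z) h1
            simpa [mul_assoc] using this
          exact Subtype.ext h2
        · intro y
          obtain ⟨g, hg, hgy⟩ := hΩuniv y
          exact ⟨⟨g, hg⟩, hgy⟩
      rw [Nat.card_eq_of_bijective _ hbij, Nat.card_zmod]
    -- get an element of order p
    haveI : Fintype ↥(M σ) := Fintype.ofFinite _
    have hcard' : Fintype.card ↥(M σ) = p := by
      rw [← Nat.card_eq_fintype_card, hcard]
    obtain ⟨g₀, hg₀⟩ := exists_prime_orderOf_dvd_card p (by rw [hcard'])
    have htop : Subgroup.zpowers g₀ = (⊤ : Subgroup ↥(M σ)) := by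
      apply Subgroup.eq_top_of_card_eq
      rw [Nat.card_zpowers, hg₀, hcard]
    set gg : Perm (ZMod p) := (g₀ : Perm (ZMod p)) with hgg
    have hggmem : gg ∈ M σ := g₀.2
    have hord : orderOf gg = p := by
      rw [hgg]
      exact (orderOf_injective (M σ).subtype (Subgroup.subtype_injective _) g₀).trans hg₀
    have hzpowers : ∀ x : Perm (ZMod p), x ∈ M σ → ∃ k : ℤ, gg ^ k = x := by
      intro x hx
      have : (⟨x, hx⟩ : ↥(M σ)) ∈ Subgroup.zpowers g₀ := by rw [htop]; trivial
      obtain ⟨k, hk⟩ := Subgroup.mem_zpowers_iff.mp this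
      refine ⟨k, ?_⟩
      have h2 := congrArg Subtype.val hk
      rw [SubgroupClass.coe_zpow] at h2
      exact h2
    -- conjugation of gg by T 1
    obtain ⟨k, hk⟩ := hzpowers _ (T_conj_mem_M σ π hR 1 gg hggmem)
    have conj_zpow : ∀ (h g : Perm (ZMod p)) (m : ℤ), (h * g * h⁻¹) ^ m = h * g ^ m * h⁻¹ := by
      intro h g m
      rw [← MulAut.conj_apply, ← MulAut.conj_apply, ← map_zpow]
    have hiter : ∀ n : ℕ, (T 1 : Perm (ZMod p)) ^ n * gg * ((T 1 : Perm (ZMod p)) ^ n)⁻¹ = gg ^ (k ^ n) := by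
      intro n
      induction n with
      | zero => simp
      | succ n ih =>
          have e1 : (T 1 : Perm (ZMod p)) ^ (n+1) * gg * ((T 1 : Perm (ZMod p)) ^ (n+1))⁻¹
              = T 1 * ((T 1 : Perm (ZMod p)) ^ n * gg * ((T 1 : Perm (ZMod p)) ^ n)⁻¹) * (T 1)⁻¹ := by
            rw [pow_succ']
            group
          rw [e1, ih, ← conj_zpow (T 1) gg (k ^ n), ← hk, ← zpow_mul, ← pow_succ']
    have hTp : (T 1 : Perm (ZMod p)) ^ p = 1 := by
      rw [T_pow]
      have : (p • (1 : ZMod p)) = 0 := by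
        rw [nsmul_eq_mul, mul_one, ZMod.natCast_self]
      rw [this, T_zero]
    have hgfix : gg ^ (k ^ p) = gg := by
      have := hiter p
      rw [hTp] at this
      simpa using this.symm
    have hdvd1 : (p : ℤ) ∣ k ^ p - 1 := by
      have h1 : gg ^ (k ^ p - 1) = 1 := by
        rw [zpow_sub, hgfix, zpow_one, mul_inv_cancel]
      have h2 := orderOf_dvd_iff_zpow_eq_one.mpr h1
      rw [hord] at h2
      exact h2
    have hk1 : (p : ℤ) ∣ k - 1 := by
      have h1 : ((k : ZMod p)) ^ p = 1 := by
        have := (ZMod.intCast_zmod_eq_zero_iff_dvd (k ^ p - 1) p).mpr hdvd1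
        push_cast at this
        linear_combination this
      have h2 : ((k : ZMod p)) = 1 := by
        rw [← ZMod.pow_card (k : ZMod p), h1]
      have := (ZMod.intCast_zmod_eq_zero_iff_dvd (k - 1) p).mpr
      apply (ZMod.intCast_zmod_eq_zero_iff_dvd (k - 1) p).mp
      push_cast
      rw [h2]
      ring
    have hcommT : T 1 * gg * (T 1)⁻¹ = gg := by
      rw [← hk]
      have h1 : gg ^ (k - 1) = 1 := by
        have h2 : ((orderOf gg : ℤ)) ∣ k - 1 := by rw [hord]; exact hk1
        exact orderOf_dvd_iff_zpow_eq_one.mp h2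
      calc gg ^ k = gg ^ (k - 1) * gg := by rw [← zpow_add_one, sub_add_cancel]
        _ = gg := by rw [h1, one_mul]
    -- gg is a translation
    have hggT : gg = T (gg 0) := by
      apply eq_T_of_commute_T_one
      have : T 1 * gg = gg * T 1 := by
        conv_rhs => rw [← hcommT]
        group
      exact this
    have hc0 : gg 0 ≠ 0 := by
      intro hzero
      have : gg = 1 := by rw [hggT, hzero, T_zero]
      rw [this, orderOf_one] at hord
      exact hp.out.one_lt.ne hord
    -- conjugate gg by σ
    obtain ⟨m, hm⟩ := hzpowers _ (σ_conj_mem_M σ π hR gg hggmem)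
    have hσconj : σ * T (gg 0) * σ⁻¹ = T (m • gg 0) := by
      rw [← hggT, ← hm]
      conv_lhs => rw [hggT]
      rw [T_zpow]
    exact affine σ h0 (gg 0) hc0 (m • gg 0) hσconj

end Main

end SkewAux

open SkewAux in
/-- For every prime p, the cyclic group Z_p has exactly p − 1 skew-morphisms. -/
theorem card_skew_morphisms_zmod_p (p : ℕ) (hp : p.Prime) :
    Nat.card {σ : Equiv.Perm (ZMod p) //
      σ 0 = 0 ∧ ∃ π : ZMod p → ℤ, ∀ x y : ZMod p, σ (x + y) = σ x + (σ ^ π x) y} =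
      p - 1 := by
  haveI : Fact p.Prime := ⟨hp⟩
  haveI : NeZero p := ⟨hp.ne_zero⟩
  set Q := {σ : Equiv.Perm (ZMod p) //
      σ 0 = 0 ∧ ∃ π : ZMod p → ℤ, ∀ x y : ZMod p, σ (x + y) = σ x + (σ ^ π x) y} with hQ
  have key : ∀ s : Q, ∃ a : ZMod p, a ≠ 0 ∧ ∀ x, s.1 x = a * x := by
    rintro ⟨σ, h0, π, hs⟩
    exact skew_is_mul σ h0 π hs
  have h1ne : (1 : ZMod p) ≠ 0 := one_ne_zero
  have hF : ∀ s : Q, s.1 1 ≠ 0 := by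
    intro s
    obtain ⟨a, ha, hax⟩ := key s
    rw [hax 1, mul_one]
    exact ha
  have hbij : Function.Bijective (fun s : Q => Units.mk0 (s.1 1) (hF s)) := by
    constructor
    · rintro s t hst
      have h1 : s.1 1 = t.1 1 := by
        have := congrArg Units.val hst
        simpa using this
      obtain ⟨a, _, hax⟩ := key s
      obtain ⟨b, _, hbx⟩ := key t
      have hab : a = b := by
        have hs1 : s.1 1 = a := by rw [hax 1, mul_one]
        have ht1 : t.1 1 = b := by rw [hbx 1, mul_one]
        rw [← hs1, ← ht1, h1]
      apply Subtype.ext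
      ext x
      rw [hax x, hbx x, hab]
    · intro u
      have hu : (u : ZMod p) ≠ 0 := u.ne_zero
      refine ⟨⟨Equiv.mulLeft₀ (u : ZMod p) hu, ?_, ⟨fun _ => 1, ?_⟩⟩, ?_⟩
      · simp
      · intro x y
        simp [zpow_one, mul_add]
      · apply Units.ext
        simp
  rw [Nat.card_eq_of_bijective _ hbij, Nat.card_eq_fintype_card, ZMod.card_units]
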